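/- The number of integers i with 0 ≤ i ≤ q−2 such that adding i and (q−1)/2 in base p modulo q−1 involves no carries equals ((p+1)/2)^t; equivalently, the p-rank of the Laplacian of P(q) is ((p+1)/2)^t. -/

import Mathlib

open Matrix

lemma rank_map_field {K L : Type*} [Field K] [Field L] (φ : K →+* L)
    (hφ : Function.Injective φ) {n : Type*} [Fintype n] [DecidableEq n]
    (A : Matrix n n K) : (A.map φ).rank = A.rank := by
  classical
  obtain ⟨T₁, T₂, D, hD⟩ := Matrix.Pivot.exists_list_transvec_mul_mul_list_transvec_eq_diagonal A
  have h1 : IsUnit (T₁.map TransvectionStruct.toMatrix).prod.det := by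
    rw [TransvectionStruct.det_toMatrix_prod]; exact isUnit_one
  have h2 : IsUnit (T₂.map TransvectionStruct.toMatrix).prod.det := by
    rw [TransvectionStruct.det_toMatrix_prod]; exact isUnit_one
  have hrk : A.rank = (diagonal D).rank := by
    rw [← hD, rank_mul_eq_left_of_isUnit_det _ _ h2,
      rank_mul_eq_right_of_isUnit_det _ _ h1]
  have hD' : ((T₁.map TransvectionStruct.toMatrix).prod.map φ) * (A.map φ) *
      ((T₂.map TransvectionStruct.toMatrix).prod.map φ) = diagonal (φ ∘ D) := by
    rw [← Matrix.map_mul, ← Matrix.map_mul, hD, Matrix.diagonal_map (map_zero φ)]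
    rfl
  have h1' : IsUnit ((T₁.map TransvectionStruct.toMatrix).prod.map φ).det := by
    rw [← RingHom.mapMatrix_apply, ← RingHom.map_det,
      TransvectionStruct.det_toMatrix_prod, _root_.map_one]
    exact isUnit_one
  have h2' : IsUnit ((T₂.map TransvectionStruct.toMatrix).prod.map φ).det := by
    rw [← RingHom.mapMatrix_apply, ← RingHom.map_det,
      TransvectionStruct.det_toMatrix_prod, _root_.map_one]
    exact isUnit_one
  have hrk' : (A.map φ).rank = (diagonal (φ ∘ D)).rank := by
    rw [← hD', rank_mul_eq_left_of_isUnit_det _ _ h2',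
      rank_mul_eq_right_of_isUnit_det _ _ h1']
  rw [hrk, hrk', rank_diagonal, rank_diagonal]
  apply Fintype.card_congr
  refine Equiv.subtypeEquivRight fun x => not_congr ?_
  simp only [Function.comp_apply]
  exact map_eq_zero_iff φ hφ

lemma digits_mem_mod (p i : ℕ) (hp : 1 < p) (hi : i ≠ 0) :
    Nat.digits p i = i % p :: Nat.digits p (i / p) :=
  Nat.digits_def' hp (Nat.pos_of_ne_zero hi)

lemma filter_digits_card (p m : ℕ) (hp : 1 < p) (hm : m < p) (t : ℕ) :
    ((Finset.range (p ^ t)).filter (fun i => ∀ d ∈ Nat.digits p i, d ≤ m)).card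
      = (m + 1) ^ t := by
  have hp0 : 0 < p := lt_trans Nat.zero_lt_one hp
  induction t with
  | zero => simp [Finset.filter_singleton]
  | succ t ih =>
    have key : ((Finset.range (p ^ (t+1))).filter
        (fun i => ∀ d ∈ Nat.digits p i, d ≤ m)).card
        = (((Finset.range p).filter (· ≤ m)) ×ˢ
            ((Finset.range (p ^ t)).filter (fun i => ∀ d ∈ Nat.digits p i, d ≤ m))).card := by
      apply Finset.card_bij' (fun i _ => (i % p, i / p)) (fun x _ => x.1 + p * x.2)
      · intro i hi
        simp only [Finset.mem_filter, Finset.mem_range] at hi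
        obtain ⟨hilt, hid⟩ := hi
        simp only [Finset.mem_product, Finset.mem_filter, Finset.mem_range]
        refine ⟨⟨Nat.mod_lt i hp0, ?_⟩, ?_, ?_⟩
        · rcases eq_or_ne i 0 with h0 | h0
          · simp [h0, Nat.le_of_lt_succ, Nat.zero_le]
          · exact hid _ (by rw [digits_mem_mod p i hp h0]; exact List.mem_cons_self)
        · rw [Nat.div_lt_iff_lt_mul hp0]
          rw [pow_succ] at hilt
          exact hilt
        · intro d hd
          rcases eq_or_ne i 0 with h0 | h0
          · simp [h0] at hd
          · exact hid d (by rw [digits_mem_mod p i hp h0]; exact List.mem_cons_of_mem _ hd)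
      · intro x hx
        simp only [Finset.mem_product, Finset.mem_filter, Finset.mem_range] at hx
        obtain ⟨⟨h1, h2⟩, h3, h4⟩ := hx
        simp only [Finset.mem_filter, Finset.mem_range]
        constructor
        · rw [pow_succ, mul_comm]
          have h5 : p * (x.2 + 1) ≤ p * p ^ t := Nat.mul_le_mul_left p h3
          have h6 : p * (x.2 + 1) = p * x.2 + p := by ring
          linarith
        · intro d hd
          rcases eq_or_ne (x.1 + p * x.2) 0 with h0 | h0
          · simp [h0] at hd
          · rw [digits_mem_mod p _ hp h0] at hd
            have hmod : (x.1 + p * x.2) % p = x.1 := by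
              rw [Nat.add_mul_mod_self_left, Nat.mod_eq_of_lt h1]
            have hdiv : (x.1 + p * x.2) / p = x.2 := by
              rw [Nat.add_mul_div_left _ _ hp0, Nat.div_eq_of_lt h1, Nat.zero_add]
            rcases List.mem_cons.mp hd with h | h
            · rw [h, hmod]; exact h2
            · rw [hdiv] at h; exact h4 d h
      · intro i _
        exact Nat.mod_add_div i p
      · intro x hx
        simp only [Finset.mem_product, Finset.mem_filter, Finset.mem_range] at hx
        obtain ⟨⟨h1, _⟩, _, _⟩ := hx
        have hmod : (x.1 + p * x.2) % p = x.1 := by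
          rw [Nat.add_mul_mod_self_left, Nat.mod_eq_of_lt h1]
        have hdiv : (x.1 + p * x.2) / p = x.2 := by
          rw [Nat.add_mul_div_left _ _ hp0, Nat.div_eq_of_lt h1, Nat.zero_add]
        rw [hmod, hdiv]
    rw [key, Finset.card_product, ih]
    have : (Finset.range p).filter (· ≤ m) = Finset.range (m + 1) := by
      ext x
      simp only [Finset.mem_filter, Finset.mem_range]
      omega
    rw [this, Finset.card_range, pow_succ]
    ring

lemma digits_le_iff (p m : ℕ) (hp : 1 < p) :
    ∀ a, (∀ d ∈ Nat.digits p a, d ≤ m) ↔ ∀ i, a / p ^ i % p ≤ m := by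
  intro a
  induction a using Nat.strong_induction_on with
  | _ a IH =>
    rcases eq_or_ne a 0 with rfl | h0
    · simp
    · have hpa : a / p < a := Nat.div_lt_self (Nat.pos_of_ne_zero h0) hp
      rw [Nat.digits_def' hp (Nat.pos_of_ne_zero h0)]
      constructor
      · intro h i
        cases i with
        | zero => simpa using h _ (List.mem_cons_self)
        | succ j =>
          have := (IH _ hpa).mp (fun d hd => h d (List.mem_cons_of_mem _ hd)) j
          rwa [pow_succ, mul_comm, ← Nat.div_div_eq_div_mul]
      · intro h d hd
        rcases List.mem_cons.mp hd with rfl | hd'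
        · simpa using h 0
        · refine (IH _ hpa).mpr (fun j => ?_) d hd'
          have := h (j + 1)
          rwa [pow_succ, mul_comm, ← Nat.div_div_eq_div_mul] at this

lemma half_mul_odd (P Q : ℕ) (hP : P % 2 = 1) (hQ : Q % 2 = 1) :
    (P * Q - 1) / 2 = (P - 1) / 2 + P * ((Q - 1) / 2) := by
  obtain ⟨u, rfl⟩ : ∃ u, P = 2 * u + 1 := ⟨P / 2, by omega⟩
  obtain ⟨v, rfl⟩ : ∃ v, Q = 2 * v + 1 := ⟨Q / 2, by omega⟩
  have h : (2 * u + 1) * (2 * v + 1) = 2 * (u + (2 * u + 1) * v) + 1 := by ring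
  rw [h, Nat.add_sub_cancel, Nat.add_sub_cancel, Nat.add_sub_cancel,
    Nat.mul_div_cancel_left _ (by norm_num : (0:ℕ) < 2),
    Nat.mul_div_cancel_left _ (by norm_num : (0:ℕ) < 2),
    Nat.mul_div_cancel_left _ (by norm_num : (0:ℕ) < 2)]

/-- every relevant base-`p` "digit" of `(p^t-1)/2` is `(p-1)/2`. -/
lemma half_pred_pow_div_mod (p : ℕ) (hodd : p % 2 = 1) (hp : 1 < p) :
    ∀ i t, i < t → (p ^ t - 1) / 2 / p ^ i % p = (p - 1) / 2 := by
  have hp0 : 0 < p := lt_trans Nat.zero_lt_one hp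
  have key : ∀ t, 1 ≤ t → (p ^ t - 1) / 2 = (p - 1) / 2 + p * ((p ^ (t - 1) - 1) / 2) := by
    intro t ht
    have hpt : p ^ t = p * p ^ (t - 1) := by
      rw [← pow_succ', Nat.sub_add_cancel ht]
    have hodd1 : p ^ (t - 1) % 2 = 1 := Nat.odd_iff.mp ((Nat.odd_iff.mpr hodd).pow)
    rw [hpt]
    exact half_mul_odd p (p ^ (t - 1)) hodd hodd1
  intro i
  induction i with
  | zero =>
    intro t ht
    rw [pow_zero, Nat.div_one, key t ht, Nat.add_mul_mod_self_left,
      Nat.mod_eq_of_lt (by omega)]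
  | succ j IH =>
    intro t ht
    have ht1 : 1 ≤ t := by omega
    have hsmall : (p - 1) / 2 / p = 0 := Nat.div_eq_of_lt (by omega)
    rw [key t ht1, pow_succ, mul_comm (p ^ j) p, ← Nat.div_div_eq_div_mul,
      Nat.add_mul_div_left _ _ hp0, hsmall, Nat.zero_add]
    exact IH (t - 1) (by omega)

lemma choose_small_not_dvd (p m b : ℕ) (hp : p.Prime) (hm : m < p) (hb : b ≤ m) :
    ¬ p ∣ Nat.choose m b := by
  intro hdvd
  have h := Nat.choose_mul_factorial_mul_factorial hb
  have hfac : p ∣ Nat.factorial m := by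
    rw [← h]
    exact Dvd.dvd.mul_right (hdvd.mul_right _) _
  have := (Nat.Prime.dvd_factorial hp).mp hfac
  omega

lemma choose_criterion (p t : ℕ) [hfp : Fact p.Prime] (hp : p.Prime) (hodd : p % 2 = 1) (ht : 1 ≤ t)
    (a : ℕ) (ha : a < p ^ t) :
    ¬ p ∣ Nat.choose ((p ^ t - 1) / 2) a ↔ ∀ d ∈ Nat.digits p a, d ≤ (p - 1) / 2 := by
  have hp1 : 1 < p := hp.one_lt
  have hm : (p - 1) / 2 < p := by omega
  have hk : (p ^ t - 1) / 2 < p ^ t := by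
    have : 1 ≤ p ^ t := Nat.one_le_pow _ _ (by omega)
    omega
  have lucas := Choose.choose_modEq_prod_range_choose_nat (p := p) (n := (p ^ t - 1) / 2)
    (k := a) (a := t) hk ha
  rw [Finset.prod_congr rfl
    (fun i hi => by rw [half_pred_pow_div_mod p hodd hp1 i t (Finset.mem_range.mp hi)])] at lucas
  have hdvd_iff : p ∣ Nat.choose ((p ^ t - 1) / 2) a ↔
      p ∣ ∏ i ∈ Finset.range t, Nat.choose ((p - 1) / 2) (a / p ^ i % p) := by
    constructor
    · intro h
      exact Nat.modEq_zero_iff_dvd.mp (lucas.symm.trans (Nat.modEq_zero_iff_dvd.mpr h))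
    · intro h
      exact Nat.modEq_zero_iff_dvd.mp (lucas.trans (Nat.modEq_zero_iff_dvd.mpr h))
  have hfac : ∀ b : ℕ, p ∣ Nat.choose ((p - 1) / 2) b ↔ ¬ b ≤ (p - 1) / 2 := by
    intro b
    constructor
    · intro h hb
      exact choose_small_not_dvd p _ b hp hm hb h
    · intro hb
      rw [Nat.choose_eq_zero_of_lt (by omega)]
      exact dvd_zero p
  rw [hdvd_iff, Prime.dvd_finset_prod_iff hp.prime]
  push_neg
  simp only [hfac, not_not]
  rw [digits_le_iff p ((p - 1) / 2) hp1 a]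
  constructor
  · intro h i
    rcases lt_or_ge i t with hi | hi
    · exact h i (Finset.mem_range.mpr hi)
    · have : a / p ^ i = 0 := Nat.div_eq_of_lt (lt_of_lt_of_le ha (Nat.pow_le_pow_right (by omega) hi))
      simp [this]
  · intro h i _
    exact h i

open Matrix in
lemma rank_aux (F : Type*) [Field F] [Fintype F] [DecidableEq F] (q k : ℕ)
    (hcard : Fintype.card F = q) (hk1 : 1 ≤ k) (hkq : k < q) :
    (Matrix.of (fun x y : F => 1 + (x - y) ^ k)).rank
      = ((Finset.range q).filter (fun a => ((Nat.choose k a : ℕ) : F) ≠ 0)).card := by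
  classical
  have hq0 : 0 < q := lt_of_le_of_lt (Nat.zero_le k) hkq
  let e : Fin q ≃ F := (Fintype.equivFinOfCardEq hcard).symm
  set v : Fin q → F := fun i => e i with hv
  have hvinj : Function.Injective v := e.injective
  let z : Fin q := ⟨0, hq0⟩
  let kz : Fin q := ⟨k, hkq⟩
  have hzval : (z : ℕ) = 0 := rfl
  have hkzval : (kz : ℕ) = k := rfl
  have hzk : z ≠ kz := by
    intro h
    have := congrArg Fin.val h
    rw [hzval, hkzval] at this
    omega
  let V : Matrix (Fin q) (Fin q) F := vandermonde v
  let B : ℕ → Matrix (Fin q) (Fin q) F := fun m =>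
    Matrix.single (⟨m % q, Nat.mod_lt _ hq0⟩ : Fin q) (⟨(k - m) % q, Nat.mod_lt _ hq0⟩ : Fin q)
      ((-1 : F) ^ (k - m) * (Nat.choose k m : F))
  let G : Matrix (Fin q) (Fin q) F := (∑ m ∈ Finset.range (k + 1), B m) + Matrix.single z z (1 : F)
  -- entrywise description of G
  have hGentry : ∀ a b : Fin q, G a b =
      (if (a : ℕ) + (b : ℕ) = k then (-1 : F) ^ (k - (a : ℕ)) * (Nat.choose k (a : ℕ) : F) else 0)
      + (if a = z ∧ b = z then 1 else 0) := by
    intro a b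
    have hsum : (∑ m ∈ Finset.range (k + 1), B m) a b
        = if (a : ℕ) + (b : ℕ) = k then (-1 : F) ^ (k - (a : ℕ)) * (Nat.choose k (a : ℕ) : F)
          else 0 := by
      rw [Matrix.sum_apply]
      rcases le_or_gt (a : ℕ) k with hak | hak
      · rw [Finset.sum_eq_single (a : ℕ)]
        · simp only [B, Matrix.single, of_apply]
          have h1 : (a : ℕ) % q = (a : ℕ) := Nat.mod_eq_of_lt a.isLt
          have h2 : (k - (a : ℕ)) % q = k - (a : ℕ) := Nat.mod_eq_of_lt (by omega)
          by_cases hb : (a : ℕ) + (b : ℕ) = k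
          · have ha' : (⟨(a : ℕ) % q, Nat.mod_lt _ hq0⟩ : Fin q) = a := by
              apply Fin.ext; simp [h1]
            have hb' : (⟨(k - (a : ℕ)) % q, Nat.mod_lt _ hq0⟩ : Fin q) = b := by
              apply Fin.ext; simp [h2]; omega
            simp [ha', hb', hb]
          · rw [if_neg, if_neg hb]
            rintro ⟨-, hbb⟩
            apply hb
            have : (k - (a : ℕ)) % q = (b : ℕ) := congrArg Fin.val hbb
            omega
        · intro m hm hma
          simp only [B, Matrix.single, of_apply]
          rw [if_neg]
          rintro ⟨hmm, -⟩
          apply hma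
          have : m % q = (a : ℕ) := congrArg Fin.val hmm
          have hmk : m < k + 1 := Finset.mem_range.mp hm
          rwa [Nat.mod_eq_of_lt (by omega)] at this
        · intro h
          exact absurd (Finset.mem_range.mpr (by omega)) h
      · rw [Finset.sum_eq_zero, if_neg (by omega)]
        intro m hm
        simp only [B, Matrix.single, of_apply]
        rw [if_neg]
        rintro ⟨hmm, -⟩
        have : m % q = (a : ℕ) := congrArg Fin.val hmm
        have hmk : m < k + 1 := Finset.mem_range.mp hm
        rw [Nat.mod_eq_of_lt (by omega)] at this
        omega
    have hGab : G a b = (∑ m ∈ Finset.range (k + 1), B m) a b + Matrix.single z z (1 : F) a b := rfl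
    rw [hGab, hsum]
    congr 1
    simp only [Matrix.single, of_apply]
    by_cases h : a = z ∧ b = z
    · rw [if_pos ⟨h.1.symm, h.2.symm⟩, if_pos h]
    · rw [if_neg, if_neg h]
      rintro ⟨h1, h2⟩
      exact h ⟨h1.symm, h2.symm⟩
  -- the key product identity
  have hVGV : ∀ i j : Fin q, (V * G * Vᵀ) i j = 1 + (v i - v j) ^ k := by
    intro i j
    have hstd : ∀ (a b : Fin q) (c : F),
        (V * Matrix.single a b c * Vᵀ) i j = v i ^ (a : ℕ) * c * v j ^ (b : ℕ) := by
      intro a b c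
      simp [Matrix.mul_apply, Matrix.single, ite_and, mul_ite, ite_mul, mul_zero, zero_mul,
        Finset.sum_ite_eq, Finset.sum_ite_eq', V, vandermonde]
    have expand : (V * G * Vᵀ) i j
        = (∑ m ∈ Finset.range (k + 1), (V * B m * Vᵀ) i j)
          + (V * Matrix.single z z (1 : F) * Vᵀ) i j := by
      simp only [G, Matrix.mul_add, Matrix.add_mul, Matrix.mul_sum, Matrix.sum_mul,
        Matrix.add_apply, Matrix.sum_apply]
    rw [expand]
    have hterm : ∀ m ∈ Finset.range (k + 1),
        (V * B m * Vᵀ) i j = v i ^ m * (-v j) ^ (k - m) * (Nat.choose k m : F) := by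
      intro m hm
      have hmk : m < k + 1 := Finset.mem_range.mp hm
      rw [hstd]
      simp only [Nat.mod_eq_of_lt (show m < q by omega),
        Nat.mod_eq_of_lt (show k - m < q by omega)]
      rw [neg_pow]
      ring
    rw [Finset.sum_congr rfl hterm, hstd]
    have hap := add_pow (v i) (-v j) k
    rw [← sub_eq_add_neg] at hap
    rw [← hap, hzval, pow_zero, pow_zero]
    ring
  -- rank chain
  have hdetV : IsUnit V.det := by
    rw [isUnit_iff_ne_zero]
    exact det_vandermonde_ne_zero_iff.mpr hvinj
  have hdetVT : IsUnit Vᵀ.det := by rwa [Matrix.det_transpose]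
  have h0 : (Matrix.of (fun x y : F => 1 + (x - y) ^ k))
      = (V * G * Vᵀ).submatrix e.symm e.symm := by
    ext x y
    rw [Matrix.submatrix_apply, hVGV]
    simp [v, e.apply_symm_apply]
  rw [h0, Matrix.rank_submatrix]
  rw [rank_mul_eq_left_of_isUnit_det Vᵀ (V * G) hdetVT,
    rank_mul_eq_right_of_isUnit_det V G hdetV]
  -- transvection step
  have hdetT : IsUnit (transvection z kz (-1 : F)).det := by
    rw [det_transvection_of_ne z kz hzk]; exact isUnit_one
  rw [← rank_mul_eq_right_of_isUnit_det (transvection z kz (-1 : F)) G hdetT]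
  -- identify T * G with the antidiagonal matrix
  have hTG : transvection z kz (-1 : F) * G = Matrix.of (fun a b : Fin q =>
      if (a : ℕ) + (b : ℕ) = k then (-1 : F) ^ (k - (a : ℕ)) * (Nat.choose k (a : ℕ) : F)
      else 0) := by
    ext a b
    rw [transvection, Matrix.add_mul, Matrix.one_mul]
    have hstdmul : (Matrix.single z kz (-1 : F) * G) a b
        = if a = z then -(G kz b) else 0 := by
      simp [Matrix.mul_apply, Matrix.single, ite_and, ite_mul, zero_mul,
        Finset.sum_ite_eq, eq_comm (a := z)]
    have hGkz : G kz b = if b = z then 1 else 0 := by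
      rw [hGentry]
      have hiff : ((kz : ℕ) + (b : ℕ) = k) ↔ (b = z) := by
        rw [hkzval]
        constructor
        · intro h; apply Fin.ext; rw [hzval]; omega
        · intro h; subst h; rw [hzval]; omega
      by_cases hb : b = z
      · rw [if_pos (hiff.mpr hb), if_neg (by rintro ⟨h1, -⟩; exact hzk h1.symm)]
        rw [hkzval, Nat.sub_self, pow_zero, Nat.choose_self, Nat.cast_one, if_pos hb]
        ring
      · rw [if_neg (fun h => hb (hiff.mp h)), if_neg (by rintro ⟨-, h2⟩; exact hb h2),
          if_neg hb]
        ring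
    rw [Matrix.add_apply, hstdmul, hGentry, Matrix.of_apply, hGkz]
    by_cases ha : a = z
    · subst ha
      by_cases hb : b = z
      · subst hb
        have h1 : ¬((z : ℕ) + (z : ℕ) = k) := by rw [hzval]; omega
        simp [h1]
      · simp [hb]
    · simp [ha]
  rw [hTG]
  -- column permutation to a diagonal matrix
  let σf : Fin q → Fin q := fun b =>
    ⟨if (b : ℕ) ≤ k then k - (b : ℕ) else (b : ℕ), by split_ifs <;> omega⟩
  have hσval : ∀ b : Fin q, ((σf b : Fin q) : ℕ)
      = if (b : ℕ) ≤ k then k - (b : ℕ) else (b : ℕ) := fun b => rfl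
  have hσinv : Function.Involutive σf := by
    intro b
    apply Fin.ext
    rw [hσval, hσval]
    by_cases hb : (b : ℕ) ≤ k
    · rw [if_pos hb, if_pos (Nat.sub_le k _)]
      omega
    · rw [if_neg hb, if_neg hb]
  let σ : Equiv.Perm (Fin q) := hσinv.toPerm
  have hσapp : ∀ b : Fin q, ((σ b : Fin q) : ℕ)
      = if (b : ℕ) ≤ k then k - (b : ℕ) else (b : ℕ) := hσval
  let w : Fin q → F := fun a =>
    if (a : ℕ) ≤ k then (-1 : F) ^ (k - (a : ℕ)) * (Nat.choose k (a : ℕ) : F) else 0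
  have hdiag : (Matrix.of (fun a b : Fin q =>
      if (a : ℕ) + (b : ℕ) = k then (-1 : F) ^ (k - (a : ℕ)) * (Nat.choose k (a : ℕ) : F)
      else 0)).submatrix (Equiv.refl (Fin q)) σ = Matrix.diagonal w := by
    ext a b
    rw [Matrix.submatrix_apply, Equiv.refl_apply, Matrix.of_apply]
    by_cases hab : a = b
    · subst hab
      rw [Matrix.diagonal_apply_eq]
      by_cases hb : (a : ℕ) ≤ k
      · rw [if_pos (by rw [hσapp, if_pos hb]; omega)]
        simp only [w, if_pos hb]
      · rw [if_neg (by rw [hσapp, if_neg hb]; omega)]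
        simp only [w, if_neg hb]
    · rw [Matrix.diagonal_apply_ne _ hab, if_neg]
      intro h
      apply hab
      apply Fin.ext
      rw [hσapp] at h
      by_cases hb : (b : ℕ) ≤ k
      · rw [if_pos hb] at h; omega
      · rw [if_neg hb] at h; omega
  rw [← Matrix.rank_submatrix _ (Equiv.refl (Fin q)) σ, hdiag, Matrix.rank_diagonal]
  -- count
  have hwiff : ∀ a : Fin q, w a ≠ 0 ↔ ((Nat.choose k (a : ℕ) : ℕ) : F) ≠ 0 := by
    intro a
    by_cases ha : (a : ℕ) ≤ k
    · simp only [w, if_pos ha]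
      constructor
      · intro h hc; apply h; rw [hc]; ring
      · intro h hc
        apply h
        have hne : ((-1 : F) ^ (k - (a : ℕ))) ≠ 0 := pow_ne_zero _ (by norm_num)
        exact (mul_eq_zero.mp hc).resolve_left hne
    · simp only [w, if_neg ha]
      rw [Nat.choose_eq_zero_of_lt (by omega)]
      simp
  rw [Fintype.card_subtype]
  apply Finset.card_bij (fun (a : Fin q) _ => (a : ℕ))
  · intro a ha
    rw [Finset.mem_filter] at ha ⊢
    exact ⟨Finset.mem_range.mpr a.isLt, (hwiff a).mp ha.2⟩
  · intro a _ b _ h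
    exact Fin.ext h
  · intro b hb
    rw [Finset.mem_filter, Finset.mem_range] at hb
    exact ⟨⟨b, hb.1⟩, Finset.mem_filter.mpr ⟨Finset.mem_univ _, (hwiff _).mpr hb.2⟩, rfl⟩

theorem paley_laplacian_p_rank
    (p t q : ℕ) [hp : Fact p.Prime] (hodd : Odd p) (ht : 1 ≤ t) (hq : q = p ^ t)
    (hq4 : q % 4 = 1)
    (F : Type*) [Field F] [Fintype F] [DecidableEq F]
    [DecidablePred (IsSquare : F → Prop)]
    (hcard : Fintype.card F = q)
    (L : Matrix F F ℤ)
    (hL : ∀ x y : F, L x y =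
      (if x = y then (((q - 1) / 2 : ℕ) : ℤ) else 0) -
        (if x ≠ y ∧ IsSquare (x - y) then 1 else 0)) :
    ((Finset.range (q - 1)).filter
        (fun i => ∀ d ∈ Nat.digits p i, d ≤ (p - 1) / 2)).card = ((p + 1) / 2) ^ t ∧
      (L.map (Int.cast : ℤ → ZMod p)).rank = ((p + 1) / 2) ^ t := by
  classical
  have hp1 : 1 < p := hp.out.one_lt
  have hpodd : p % 2 = 1 := Nat.odd_iff.mp hodd
  have hp3 : 3 ≤ p := by
    have := hp.out.two_le
    omega
  -- basic facts about q
  have hq1 : 1 ≤ q := by rw [hq]; exact Nat.one_le_pow _ _ (by omega)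
  have hqodd : q % 2 = 1 := by omega
  have hq5 : 5 ≤ q := by
    have hq3 : 3 ≤ q := by
      calc 3 ≤ p := hp3
        _ = p ^ 1 := (pow_one p).symm
        _ ≤ p ^ t := Nat.pow_le_pow_right (by omega) ht
        _ = q := hq.symm
    omega
  set m : ℕ := (p - 1) / 2 with hm
  set k : ℕ := (q - 1) / 2 with hk
  have hmp : m < p := by omega
  have hk1 : 1 ≤ k := by omega
  have hkq : k < q := by omega
  have hm1 : m + 1 = (p + 1) / 2 := by omega
  -- the count over range q
  have hcnt : ((Finset.range q).filter
      (fun i => ∀ d ∈ Nat.digits p i, d ≤ m)).card = (m + 1) ^ t := by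
    rw [hq]
    exact filter_digits_card p m hp1 hmp t
  -- q - 1 does not satisfy the digit condition
  have hQfact : q = p * p ^ (t - 1) := by
    rw [hq, ← pow_succ', Nat.sub_add_cancel ht]
  have hQ1 : 1 ≤ p ^ (t - 1) := Nat.one_le_pow _ _ (by omega)
  have hmod : (q - 1) % p = p - 1 := by
    have hA : p * (p ^ (t - 1) - 1) + p = p * p ^ (t - 1) := by
      rw [← Nat.mul_succ, show (p ^ (t - 1) - 1).succ = p ^ (t - 1) from by omega]
    have hq1' : q - 1 = p * (p ^ (t - 1) - 1) + (p - 1) := by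
      rw [hQfact, ← hA]
      omega
    rw [hq1', Nat.mul_add_mod, Nat.mod_eq_of_lt (by omega)]
  have hfail : ¬ (∀ d ∈ Nat.digits p (q - 1), d ≤ m) := by
    intro hpred
    have hmem : p - 1 ∈ Nat.digits p (q - 1) := by
      rw [Nat.digits_def' hp1 (show 0 < q - 1 by omega), hmod]
      exact List.mem_cons_self
    have := hpred _ hmem
    omega
  have hfilter_eq : ((Finset.range (q - 1)).filter
      (fun i => ∀ d ∈ Nat.digits p i, d ≤ m)).card
      = ((Finset.range q).filter (fun i => ∀ d ∈ Nat.digits p i, d ≤ m)).card := by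
    have hins : Finset.range q = insert (q - 1) (Finset.range (q - 1)) := by
      conv_lhs => rw [show q = (q - 1) + 1 by omega]
      rw [Finset.range_add_one]
    rw [hins, Finset.filter_insert, if_neg hfail]
  have hfirst : ((Finset.range (q - 1)).filter
      (fun i => ∀ d ∈ Nat.digits p i, d ≤ m)).card = ((p + 1) / 2) ^ t := by
    rw [hfilter_eq, hcnt, hm1]
  refine ⟨hfirst, ?_⟩
  -- characteristic of F
  obtain ⟨c, hc⟩ := CharP.exists F
  haveI := hc
  obtain ⟨n, hcp, hcard'⟩ := FiniteField.card F c
  have hpc : p = c := by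
    have hdvd : p ∣ c ^ (n : ℕ) := by
      rw [← hcard', hcard, hq]
      exact dvd_pow_self p (by omega)
    exact (Nat.prime_dvd_prime_iff_eq hp.out hcp).mp (hp.out.dvd_of_dvd_pow hdvd)
  haveI hcharP : CharP F p := by rw [hpc]; exact hc
  have h2F : (2 : F) ≠ 0 := by
    intro h
    have h2 : ((2 : ℕ) : F) = 0 := by push_cast; exact h
    rw [CharP.cast_eq_zero_iff F p] at h2
    have := Nat.le_of_dvd (by norm_num) h2
    omega
  have hF2 : ringChar F ≠ 2 := by
    have : ringChar F = p := CharP.ringChar_of_prime_eq_zero hp.out (CharP.cast_eq_zero F p)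
    omega
  -- base change from ZMod p to F
  have hinj : Function.Injective (ZMod.castHom (dvd_refl p) F) := ZMod.castHom_injective F
  have hmapmap : (L.map (Int.cast : ℤ → ZMod p)).map (ZMod.castHom (dvd_refl p) F)
      = L.map (Int.cast : ℤ → F) := by
    ext x y
    simp only [Matrix.map_apply]
    exact map_intCast (ZMod.castHom (dvd_refl p) F) (L x y)
  rw [← rank_map_field (ZMod.castHom (dvd_refl p) F) hinj (L.map (Int.cast : ℤ → ZMod p)),
    hmapmap]
  -- identify L over F with a scalar multiple of the power matrix
  have hdiagval : (((q - 1) / 2 : ℕ) : F) = -(2⁻¹ : F) := by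
    have h0 : ((q : ℕ) : F) = 0 := by rw [← hcard]; exact FiniteField.cast_card_eq_zero F
    have hc1 : ((q - 1 : ℕ) : F) = -1 := by
      rw [Nat.cast_sub (by omega), h0, Nat.cast_one]
      ring
    have h2k : ((2 * ((q - 1) / 2) : ℕ) : F) = -1 := by
      rw [show 2 * ((q - 1) / 2) = q - 1 by omega, hc1]
    have h' : (2 : F) * (((q - 1) / 2 : ℕ) : F) = -1 := by
      push_cast at h2k
      exact h2k
    have : (((q - 1) / 2 : ℕ) : F) = 2⁻¹ * ((2 : F) * (((q - 1) / 2 : ℕ) : F)) :=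
      (inv_mul_cancel_left₀ h2F _).symm
    rw [this, h', mul_neg, mul_one]
  have hcard2 : Fintype.card F / 2 = k := by rw [hcard]; omega
  have hNeq : L.map (Int.cast : ℤ → F)
      = Matrix.diagonal (fun _ : F => (-(2⁻¹) : F))
        * Matrix.of (fun x y : F => 1 + (x - y) ^ k) := by
    ext x y
    rw [Matrix.map_apply, hL x y, Matrix.diagonal_mul, Matrix.of_apply]
    by_cases hxy : x = y
    · subst hxy
      rw [if_pos rfl, if_neg (fun h => h.1 rfl), sub_zero, Int.cast_natCast, hdiagval,
        sub_self, zero_pow (by omega), add_zero, mul_one]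
    · rw [if_neg hxy]
      have hxy0 : x - y ≠ 0 := sub_ne_zero.mpr hxy
      rcases FiniteField.pow_dichotomy hF2 hxy0 with h1 | h1 <;> rw [hcard2] at h1
      · have hsq : IsSquare (x - y) := by
          rw [FiniteField.isSquare_iff hF2 hxy0, hcard2]
          exact h1
        rw [if_pos ⟨hxy, hsq⟩, h1]
        have : (2⁻¹ : F) * 2 = 1 := inv_mul_cancel₀ h2F
        push_cast
        linear_combination this
      · have hsq : ¬ IsSquare (x - y) := by
          rw [FiniteField.isSquare_iff hF2 hxy0, hcard2, h1]
          intro h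
          apply h2F
          linear_combination -h
        rw [if_neg (fun h => hsq h.2), h1]
        push_cast
        ring
  have hdetD : IsUnit (Matrix.diagonal (fun _ : F => (-(2⁻¹) : F))).det := by
    rw [Matrix.det_diagonal, Finset.prod_const, isUnit_iff_ne_zero]
    exact pow_ne_zero _ (neg_ne_zero.mpr (inv_ne_zero h2F))
  rw [hNeq, Matrix.rank_mul_eq_right_of_isUnit_det _ _ hdetD,
    rank_aux F q k hcard hk1 hkq]
  -- translate the binomial condition into the digit condition
  have hfilter2 : ((Finset.range q).filter (fun a => ((Nat.choose k a : ℕ) : F) ≠ 0))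
      = ((Finset.range q).filter (fun i => ∀ d ∈ Nat.digits p i, d ≤ m)) := by
    apply Finset.filter_congr
    intro a ha
    rw [Finset.mem_range] at ha
    rw [Ne, CharP.cast_eq_zero_iff F p]
    constructor
    · intro h
      exact (choose_criterion p t hp.out hpodd ht a (by rwa [← hq])).mp (by rwa [hk, hq] at h)
    · intro h
      rw [hk, hq]
      exact (choose_criterion p t hp.out hpodd ht a (by rwa [← hq])).mpr h
  rw [hfilter2, hcnt, hm1]
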